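/- arXiv:1911.02540 — 2 statements merged into one kernel-verified Lean document; each statement's English description precedes it below -/
import Mathlib

section
/- Let S ⊆ ℕ be a finite set with 0 ∈ S and |S| = k ≥ 1. Then z_S ≤ (1/π)·√k·log(k), where log is the natural logarithm. -/
open Real Finset

/-- `g_S(t) = ∑_{e ∈ S} t^(2e)`. -/
noncomputable def gS (S : Finset ℕ) (t : ℝ) : ℝ := ∑ e ∈ S, t ^ (2 * e)

/-- `h_S(t) = ∑_{e ∈ S} e² t^(2e-2)` (the term for `e = 0` being `0`). -/
noncomputable def hS (S : Finset ℕ) (t : ℝ) : ℝ := ∑ e ∈ S, (e : ℝ) ^ 2 * t ^ (2 * e - 2)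

/-- `q_S(t) = ∑_{e ∈ S} e t^(2e-1)` (the term for `e = 0` being `0`). -/
noncomputable def qS (S : Finset ℕ) (t : ℝ) : ℝ := ∑ e ∈ S, (e : ℝ) * t ^ (2 * e - 1)

/-- `E_S(t) = g_S(t) h_S(t) - q_S(t)²`. -/
noncomputable def ES (S : Finset ℕ) (t : ℝ) : ℝ := gS S t * hS S t - qS S t ^ 2

/-- The expected number of real zeros in `(0,1)`, given by the Edelman–Kostlan integral. -/
noncomputable def zS (S : Finset ℕ) : ℝ :=
  (1 / Real.pi) * ∫ t in (0 : ℝ)..1, Real.sqrt (ES S t) / gS S t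

section Aux

lemma arsinh_def' (x:ℝ) : Real.arsinh x = Real.log (x + Real.sqrt (1+x^2)) := by
  unfold Real.arsinh; rfl

lemma log43_ub : Real.log (4/3) ≤ 7/24 := by
  rw [Real.log_le_iff_le_exp (by norm_num)]
  have h1 : Real.exp (7/24) = Real.exp (7/288) ^ (12:ℕ) := by
    rw [← Real.exp_nat_mul]; norm_num
  have h2 : (295/288 : ℝ) ≤ Real.exp (7/288) := by
    have := Real.add_one_le_exp (7/288 : ℝ); linarith
  have h3 : ((295:ℝ)/288) ^ (12:ℕ) ≤ Real.exp (7/288) ^ (12:ℕ) :=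
    pow_le_pow_left₀ (by norm_num) h2 12
  have h4 : (4/3:ℝ) ≤ ((295:ℝ)/288) ^ (12:ℕ) := by norm_num
  calc (4/3:ℝ) ≤ ((295:ℝ)/288)^(12:ℕ) := h4
    _ ≤ Real.exp (7/288) ^ (12:ℕ) := h3
    _ = Real.exp (7/24) := h1.symm

lemma log43_lb : (1/4:ℝ) ≤ Real.log (4/3) := by
  have h := Real.log_le_sub_one_of_pos (show (0:ℝ) < 3/4 by norm_num)
  have h2 : Real.log (3/4 : ℝ) = - Real.log (4/3) := by
    rw [show (3/4:ℝ) = (4/3)⁻¹ by norm_num, Real.log_inv]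
  rw [h2] at h; linarith

lemma log3_eq : Real.log 3 = 2 * Real.log 2 - Real.log (4/3) := by
  have h0 : Real.log ((4:ℝ) * (3/4)) = Real.log 4 + Real.log (3/4) :=
    Real.log_mul (by norm_num) (by norm_num)
  have h4 : Real.log (4:ℝ) = 2 * Real.log 2 := by
    rw [show (4:ℝ) = 2^(2:ℕ) by norm_num, Real.log_pow]; push_cast; ring
  have h2 : Real.log (3/4 : ℝ) = - Real.log (4/3) := by
    rw [show (3/4:ℝ) = (4/3)⁻¹ by norm_num, Real.log_inv]
  rw [show ((4:ℝ) * (3/4)) = 3 by norm_num, h4, h2] at h0; linarith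

lemma sqrt2_lb : (1:ℝ) ≤ Real.sqrt 2 := (Real.le_sqrt (by norm_num) (by norm_num)).2 (by norm_num)
lemma sqrt3_lb : (1.7320508:ℝ) ≤ Real.sqrt 3 := (Real.le_sqrt (by norm_num) (by norm_num)).2 (by norm_num)
lemma sqrt3_ub : Real.sqrt 3 ≤ 1.7320509 := (Real.sqrt_le_left (by norm_num)).2 (by norm_num)
lemma sqrt6_lb : (2.449:ℝ) ≤ Real.sqrt 6 := (Real.le_sqrt (by norm_num) (by norm_num)).2 (by norm_num)
lemma sqrt4_eq : Real.sqrt 4 = 2 := by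
  rw [show (4:ℝ) = 2^2 by norm_num, Real.sqrt_sq]; norm_num

-- j = 1
lemma keyj1 : Real.arsinh (Real.sqrt 1) ≤
    Real.sqrt 1 * (Real.sqrt 2 * Real.log 2 - Real.sqrt 1 * Real.log 1) := by
  rw [Real.sqrt_one, Real.log_one, arsinh_def']
  have h1 : Real.sqrt (1 + 1^2) = Real.sqrt 2 := by norm_num
  rw [h1]
  have h2 : (0:ℝ) < (1 + Real.sqrt 2)/2 := by positivity
  have h3 : Real.log (1 + Real.sqrt 2) = Real.log 2 + Real.log ((1+Real.sqrt 2)/2) := by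
    rw [← Real.log_mul (by norm_num) (by positivity)]
    ring_nf
  have h4 := Real.log_le_sub_one_of_pos h2
  have h5 := sqrt2_lb
  have h6 := Real.log_two_gt_d9
  nlinarith

-- j = 2
lemma keyj2 : Real.arsinh (Real.sqrt 2) ≤
    Real.sqrt 2 * (Real.sqrt 3 * Real.log 3 - Real.sqrt 2 * Real.log 2) := by
  rw [arsinh_def']
  have hsq : Real.sqrt 2 ^ 2 = 2 := Real.sq_sqrt (by norm_num)
  rw [show (1:ℝ) + Real.sqrt 2 ^ 2 = 3 by rw [hsq]; norm_num]
  have h23 : Real.sqrt 2 ≤ Real.sqrt 3 := Real.sqrt_le_sqrt (by norm_num)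
  have h3pos : (0:ℝ) < Real.sqrt 3 := Real.sqrt_pos.2 (by norm_num)
  have h2pos : (0:ℝ) < Real.sqrt 2 := Real.sqrt_pos.2 (by norm_num)
  have lhs1 : Real.log (Real.sqrt 2 + Real.sqrt 3) ≤ Real.log (2 * Real.sqrt 3) := by
    apply Real.log_le_log (by positivity); linarith
  have lhs2 : Real.log (2 * Real.sqrt 3) = Real.log 2 + Real.log 3 / 2 := by
    rw [Real.log_mul (by norm_num) (by positivity), Real.log_sqrt (by norm_num)]
  have rhs1 : Real.sqrt 2 * (Real.sqrt 3 * Real.log 3 - Real.sqrt 2 * Real.log 2)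
      = Real.sqrt 6 * Real.log 3 - 2 * Real.log 2 := by
    have h6 : Real.sqrt 2 * Real.sqrt 3 = Real.sqrt 6 := by
      rw [← Real.sqrt_mul (by norm_num)]; norm_num
    have h22 : Real.sqrt 2 * Real.sqrt 2 = 2 := Real.mul_self_sqrt (by norm_num)
    linear_combination Real.log 3 * h6 - Real.log 2 * h22
  rw [rhs1]
  have hl3lb : (2:ℝ) * Real.log 2 - 7/24 ≤ Real.log 3 := by
    rw [log3_eq]; linarith [log43_ub]
  have hl2lb := Real.log_two_gt_d9
  have hl2ub := Real.log_two_lt_d9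
  have hB : (1.0946:ℝ) ≤ Real.log 3 := by nlinarith
  have hA : (1.949:ℝ) ≤ Real.sqrt 6 - 1/2 := by linarith [sqrt6_lb]
  have hprod : (1.949:ℝ) * 1.0946 ≤ (Real.sqrt 6 - 1/2) * Real.log 3 :=
    mul_le_mul hA hB (by norm_num) (by linarith)
  nlinarith

-- j = 3
lemma keyj3 : Real.arsinh (Real.sqrt 3) ≤
    Real.sqrt 3 * (Real.sqrt 4 * Real.log 4 - Real.sqrt 3 * Real.log 3) := by
  rw [arsinh_def']
  have hsq : Real.sqrt 3 ^ 2 = 3 := Real.sq_sqrt (by norm_num)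
  rw [show (1:ℝ) + Real.sqrt 3 ^ 2 = 4 by rw [hsq]; norm_num, sqrt4_eq]
  have h3pos : (0:ℝ) < Real.sqrt 3 := Real.sqrt_pos.2 (by norm_num)
  have hl4 : Real.log (4:ℝ) = 2 * Real.log 2 := by
    rw [show (4:ℝ) = 2^(2:ℕ) by norm_num, Real.log_pow]; push_cast; ring
  have h33 : Real.sqrt 3 * Real.sqrt 3 = 3 := Real.mul_self_sqrt (by norm_num)
  have lhs1 : Real.log (Real.sqrt 3 + 2) = Real.log 4 + Real.log ((Real.sqrt 3 + 2)/4) := by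
    rw [← Real.log_mul (by norm_num) (by positivity)]; ring_nf
  have lhs2 := Real.log_le_sub_one_of_pos (show (0:ℝ) < (Real.sqrt 3 + 2)/4 by positivity)
  have hl3ub : Real.log 3 ≤ 2 * Real.log 2 - 1/4 := by
    rw [log3_eq]; linarith [log43_lb]
  have hl2lb := Real.log_two_gt_d9
  have hl2ub := Real.log_two_lt_d9
  have s3l := sqrt3_lb
  have s3u := sqrt3_ub
  have hl3lb : (2:ℝ) * Real.log 2 - 7/24 ≤ Real.log 3 := by
    rw [log3_eq]; linarith [log43_ub]
  -- goal: log(√3+2) ≤ √3*(2*log4 ... ) i.e. ≤ √3*2*(2 log2) - 3 log3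
  have rhs1 : Real.sqrt 3 * (2 * Real.log 4 - Real.sqrt 3 * Real.log 3)
      = 4 * Real.sqrt 3 * Real.log 2 - 3 * Real.log 3 := by
    rw [hl4]; linear_combination (- Real.log 3) * h33
  rw [rhs1]
  have hprod : (8 - 4*Real.sqrt 3) * Real.log 2 ≤ (8 - 4*1.7320508) * 0.6931471808 := by
    apply mul_le_mul (by linarith) (by linarith) (by linarith) (by norm_num)
  nlinarith

lemma keyj_core (x : ℝ) (hx : 1 ≤ x)
    (hkey : Real.log 2 + (Real.log (x+1))/(8*x) + 1/(x+1) ≤ 1) :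
    Real.arsinh (Real.sqrt x) ≤
      Real.sqrt x * (Real.sqrt (x+1) * Real.log (x+1) - Real.sqrt x * Real.log x) := by
  have hx0 : (0:ℝ) < x := by linarith
  have hx10 : (0:ℝ) < x + 1 := by linarith
  set s := Real.sqrt x with hs
  set r := Real.sqrt (x+1) with hr
  have hs0 : 0 ≤ s := Real.sqrt_nonneg _
  have hr1 : 1 ≤ r := by
    rw [hr]; exact (Real.le_sqrt (by norm_num) (by linarith)).2 (by nlinarith)
  have hr0 : 0 < r := by linarith
  have hssq : s^2 = x := Real.sq_sqrt hx0.le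
  have hrsq : r^2 = x + 1 := Real.sq_sqrt hx10.le
  have hsr : s ≤ r := Real.sqrt_le_sqrt (by linarith)
  have hL0 : 0 ≤ Real.log (x+1) := Real.log_nonneg (by linarith)
  set L := Real.log (x+1) with hLdef
  have ha : Real.arsinh s ≤ Real.log 2 + L / 2 := by
    rw [arsinh_def', hssq]
    have h1 : s + Real.sqrt (1 + x) ≤ 2 * r := by
      rw [show (1:ℝ) + x = x + 1 by ring]; rw [← hr]; linarith
    have h2 : (0:ℝ) < s + Real.sqrt (1+x) := by
      have h3 : Real.sqrt (1+x) = r := by rw [hr, show (1:ℝ)+x = x+1 by ring]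
      rw [h3]; linarith
    calc Real.log (s + Real.sqrt (1+x)) ≤ Real.log (2*r) := Real.log_le_log h2 h1
      _ = Real.log 2 + Real.log r := Real.log_mul (by norm_num) (by linarith)
      _ = Real.log 2 + L / 2 := by rw [hr, Real.log_sqrt hx10.le]
  have hb : x + 1/2 - 1/(8*x) ≤ s * r := by
    have hq : (x + 1/2 - 1/(8*x))^2 ≤ x^2 + x := by
      field_simp
      ring_nf
      nlinarith [sq_nonneg x, hx0]
    have hnn : 0 ≤ x + 1/2 - 1/(8*x) := by
      have : 1/(8*x) ≤ 1 := by rw [div_le_one (by linarith)]; linarith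
      linarith
    have hsrm : s * r = Real.sqrt (x * (x+1)) := by
      rw [hs, hr, ← Real.sqrt_mul hx0.le]
    rw [hsrm, show x*(x+1) = x^2 + x by ring]
    exact (Real.le_sqrt hnn (by nlinarith)).2 hq
  have hc : x * Real.log x ≤ x * L - x/(x+1) := by
    have h1 : Real.log (x / (x+1)) ≤ x/(x+1) - 1 :=
      Real.log_le_sub_one_of_pos (by positivity)
    have h2 : Real.log (x/(x+1)) = Real.log x - L := Real.log_div (ne_of_gt hx0) (ne_of_gt hx10)
    have h3 : Real.log x ≤ L + x/(x+1) - 1 := by linarith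
    have h6 : x * (L + x/(x+1) - 1) = x*L - x/(x+1) := by field_simp; ring
    calc x * Real.log x ≤ x * (L + x/(x+1) - 1) := mul_le_mul_of_nonneg_left h3 hx0.le
      _ = x*L - x/(x+1) := h6
  have hxx : x/(x+1) = 1 - 1/(x+1) := by field_simp; ring
  have hmain : (x + 1/2 - 1/(8*x)) * L - (x*L - x/(x+1)) ≤ s * (r * L - s * Real.log x) := by
    have e1 : s * (r * L - s * Real.log x) = (s*r)*L - x * Real.log x := by
      rw [← hssq]; ring
    rw [e1]
    have e2 : (x + 1/2 - 1/(8*x)) * L ≤ (s*r)*L := mul_le_mul_of_nonneg_right hb hL0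
    linarith
  have hred : Real.log 2 + L/2 ≤ (x + 1/2 - 1/(8*x)) * L - (x*L - x/(x+1)) := by
    have he : (x + 1/2 - 1/(8*x)) * L - (x*L - x/(x+1)) = L/2 - L/(8*x) + x/(x+1) := by
      field_simp; ring
    rw [he, hxx]
    linarith [hkey]
  linarith [ha, hred, hmain]

lemma hkey_ge5 (x : ℝ) (hx : 5 ≤ x) :
    Real.log 2 + (Real.log (x+1))/(8*x) + 1/(x+1) ≤ 1 := by
  have hx0 : (0:ℝ) < x := by linarith
  have hx10 : (0:ℝ) < x + 1 := by linarith
  set r := Real.sqrt (x+1) with hr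
  have hr1 : 1 ≤ r := by
    rw [hr]; exact (Real.le_sqrt (by norm_num) (by linarith)).2 (by nlinarith)
  have hr0 : 0 < r := by linarith
  have hrsq : r^2 = x + 1 := Real.sq_sqrt hx10.le
  set L := Real.log (x+1) with hLdef
  have hd : L ≤ 2*(r - 1) := by
    have h1 : L = 2 * Real.log r := by rw [hLdef, hr, Real.log_sqrt hx10.le]; ring
    have h2 := Real.log_le_sub_one_of_pos hr0
    linarith
  have hrx : (r - 1) * r ≤ x := by nlinarith
  have hr6 : (2.449:ℝ) ≤ r := by
    calc (2.449:ℝ) ≤ Real.sqrt 6 := sqrt6_lb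
      _ ≤ r := by rw [hr]; exact Real.sqrt_le_sqrt (by linarith)
  have t1 : L/(8*x) ≤ (r-1)/(4*x) := by
    rw [show L/(8*x) = (L/2)/(4*x) by ring]
    gcongr
    linarith
  have t2 : (r-1)/(4*x) ≤ 1/(4*r) := by
    rw [div_le_div_iff₀ (by linarith) (by linarith)]
    nlinarith
  have t3 : (1:ℝ)/(4*r) ≤ 1/(4*2.449) := by
    apply one_div_le_one_div_of_le (by norm_num); linarith
  have t4 : (1:ℝ)/(x+1) ≤ 1/6 := by
    apply one_div_le_one_div_of_le (by norm_num); linarith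
  have hl2 := Real.log_two_lt_d9
  have hnum : (0.6931471808:ℝ) + 1/(4*2.449) + 1/6 ≤ 1 := by norm_num
  linarith

lemma hkey4 : Real.log 2 + (Real.log ((4:ℝ)+1))/(8*4) + 1/((4:ℝ)+1) ≤ 1 := by
  have h58 : Real.log (5:ℝ) ≤ Real.log 8 := Real.log_le_log (by norm_num) (by norm_num)
  have h8 : Real.log (8:ℝ) = 3 * Real.log 2 := by
    rw [show (8:ℝ) = 2^(3:ℕ) by norm_num, Real.log_pow]; push_cast; ring
  have hl2 := Real.log_two_lt_d9
  have hl2pos : (0:ℝ) < Real.log 2 := Real.log_pos (by norm_num)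
  norm_num
  nlinarith

lemma keyj (j : ℕ) (hj : 1 ≤ j) :
    Real.arsinh (Real.sqrt j) ≤
      Real.sqrt j * (Real.sqrt ((j:ℝ)+1) * Real.log ((j:ℝ)+1) - Real.sqrt j * Real.log j) := by
  rcases lt_or_ge j 5 with h5 | h5
  · interval_cases j
    · have := keyj1; push_cast; norm_num at this ⊢; convert this using 2 <;> norm_num
    · have := keyj2; push_cast; norm_num at this ⊢; convert this using 2 <;> norm_num
    · have := keyj3; push_cast; norm_num at this ⊢; convert this using 2 <;> norm_num
    · have h4 := keyj_core 4 (by norm_num) hkey4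
      push_cast
      convert h4 using 3 <;> norm_num
  · have hx : (5:ℝ) ≤ (j:ℝ) := by exact_mod_cast h5
    exact keyj_core (j:ℝ) (by linarith) (hkey_ge5 _ hx)

noncomputable def uu (i : ℕ) : ℝ := Real.sqrt i * Real.log i

lemma delta_nonneg (j : ℕ) : 0 ≤ uu (j+1) - uu j := by
  unfold uu
  rcases Nat.eq_zero_or_pos j with h | h
  · subst h; simp
  have h1 : (1:ℝ) ≤ (j:ℝ) := by exact_mod_cast h
  have h2 : Real.sqrt j ≤ Real.sqrt (j+1) := Real.sqrt_le_sqrt (by push_cast; linarith)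
  have h3 : Real.log j ≤ Real.log (j+1) := Real.log_le_log (by linarith) (by push_cast; linarith)
  have h4 : (0:ℝ) ≤ Real.log j := Real.log_nonneg h1
  have h5 : (0:ℝ) ≤ Real.sqrt j := Real.sqrt_nonneg _
  push_cast
  nlinarith [mul_le_mul h2 h3 h4 (Real.sqrt_nonneg _)]

lemma icc_range (f : ℕ → ℝ) (n : ℕ) : ∑ j ∈ Finset.Icc 1 n, f j = ∑ i ∈ Finset.range n, f (i+1) := by
  induction n with
  | zero => simp
  | succ m ih =>
    rw [Finset.sum_Icc_succ_top (by omega), ih, Finset.sum_range_succ]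

lemma sum_delta (k : ℕ) (hk : 1 ≤ k) :
    ∑ j ∈ Finset.Icc 1 (k-1), (uu (j+1) - uu j) = Real.sqrt k * Real.log k := by
  rw [icc_range (fun j => uu (j+1) - uu j) (k-1)]
  rw [Finset.sum_range_sub (fun i => uu (i+1)) (k-1)]
  have h2 : (k-1) + 1 = k := by omega
  rw [h2]
  unfold uu
  simp

lemma denom_pos (c : ℕ) (x : ℝ) (f : ℕ) : (0:ℝ) < 1 + (c:ℝ) * x^(2*f) := by
  have h1 : (0:ℝ) ≤ x^(2*f) := by
    rw [pow_mul']
    positivity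
  have h2 : (0:ℝ) ≤ (c:ℝ) := Nat.cast_nonneg c
  nlinarith

lemma m_continuous (f c : ℕ) : Continuous (fun t : ℝ => (f:ℝ) * t^(f-1) / Real.sqrt (1 + (c:ℝ) * t^(2*f))) := by
  apply Continuous.div
  · continuity
  · continuity
  · intro x
    have := denom_pos c x f
    positivity

lemma integral_m (f c : ℕ) (hf : 1 ≤ f) (hc : 1 ≤ c) :
    ∫ t in (0:ℝ)..1, (f:ℝ) * t^(f-1) / Real.sqrt (1 + (c:ℝ) * t^(2*f))
      = Real.arsinh (Real.sqrt c) / Real.sqrt c := by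
  have hcR : (0:ℝ) < (c:ℝ) := by exact_mod_cast hc
  have hsc : (0:ℝ) < Real.sqrt c := Real.sqrt_pos.2 hcR
  set F : ℝ → ℝ := fun t => Real.arsinh (Real.sqrt c * t^f) / Real.sqrt c with hF
  have hderiv : ∀ x ∈ Set.uIcc (0:ℝ) 1, HasDerivAt F
      ((f:ℝ) * x^(f-1) / Real.sqrt (1 + (c:ℝ) * x^(2*f))) x := by
    intro x _
    have hu : HasDerivAt (fun t : ℝ => Real.sqrt c * t^f)
        (Real.sqrt c * ((f:ℝ) * x^(f-1))) x := (hasDerivAt_pow f x).const_mul _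
    have har := Real.hasDerivAt_arsinh (Real.sqrt c * x^f)
    have hcomp := HasDerivAt.comp x har hu
    have hval : (Real.sqrt (1 + (Real.sqrt c * x^f)^2))⁻¹ * (Real.sqrt c * ((f:ℝ) * x^(f-1)))
        / Real.sqrt c = (f:ℝ) * x^(f-1) / Real.sqrt (1 + (c:ℝ) * x^(2*f)) := by
      have h1 : (Real.sqrt c * x^f)^2 = (c:ℝ) * x^(2*f) := by
        rw [mul_pow, Real.sq_sqrt hcR.le, pow_mul']
      rw [h1]
      have hne : Real.sqrt (c:ℝ) ≠ 0 := ne_of_gt hsc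
      field_simp
    have := (hcomp.div_const (Real.sqrt c))
    rw [hval] at this
    exact this
  have hint : IntervalIntegrable (fun x:ℝ => (f:ℝ) * x^(f-1) / Real.sqrt (1 + (c:ℝ) * x^(2*f)))
      MeasureTheory.volume 0 1 := (m_continuous f c).intervalIntegrable 0 1
  rw [intervalIntegral.integral_eq_sub_of_hasDerivAt hderiv hint]
  rw [hF]
  simp only [one_pow, mul_one]
  rw [zero_pow (by omega), mul_zero, Real.arsinh_zero, zero_div, sub_zero]


lemma term_id (t : ℝ) (e f : ℕ) :
    ((f:ℝ) - (e:ℝ))^2 * t^(2*e+2*f-2)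
      = t^(2*e) * ((f:ℝ)^2 * t^(2*f-2)) + ((e:ℝ)^2 * t^(2*e-2)) * t^(2*f)
        - 2 * (((e:ℝ) * t^(2*e-1)) * ((f:ℝ) * t^(2*f-1))) := by
  rcases e with _ | a <;> rcases f with _ | b
  · norm_num
  · have h1 : 2*0+2*(b+1)-2 = 2*(b+1)-2 := by omega
    rw [h1]; norm_num
  · have h1 : 2*(a+1)+2*0-2 = 2*(a+1)-2 := by omega
    rw [h1]; push_cast; ring_nf
  · have h1 : 2*(a+1)+2*(b+1)-2 = (2*a+2) + (2*b+2) - 2 := by omega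
    have e1 : 2*(a+1)+2*(b+1)-2 = (2*a) + (2*b+2) := by omega
    have e2 : 2*(a+1) = 2*a + 2 := by omega
    have e3 : 2*(a+1)-2 = 2*a := by omega
    have e4 : 2*(b+1)-2 = 2*b := by omega
    have e5 : 2*(a+1)-1 = 2*a+1 := by omega
    have e6 : 2*(b+1)-1 = 2*b+1 := by omega
    have e7 : 2*(b+1) = 2*b+2 := by omega
    rw [e1, e3, e4, e5, e6, e2, e7]
    push_cast
    ring

lemma two_ES (S : Finset ℕ) (t : ℝ) :
    2 * ES S t = ∑ e ∈ S, ∑ f ∈ S, ((f:ℝ) - (e:ℝ))^2 * t^(2*e+2*f-2) := by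
  have h : ∑ e ∈ S, ∑ f ∈ S, ((f:ℝ) - (e:ℝ))^2 * t^(2*e+2*f-2)
      = ∑ e ∈ S, ∑ f ∈ S, (t^(2*e) * ((f:ℝ)^2 * t^(2*f-2)) + ((e:ℝ)^2 * t^(2*e-2)) * t^(2*f)
        - 2 * (((e:ℝ) * t^(2*e-1)) * ((f:ℝ) * t^(2*f-1)))) := by
    apply Finset.sum_congr rfl; intro e _; apply Finset.sum_congr rfl; intro f _
    exact term_id t e f
  rw [h]
  have expand : ∀ (F G : ℕ → ℝ), (∑ e ∈ S, F e) * (∑ f ∈ S, G f) = ∑ e ∈ S, ∑ f ∈ S, F e * G f := by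
    intro F G; rw [Finset.sum_mul_sum]
  simp only [Finset.sum_sub_distrib, Finset.sum_add_distrib]
  rw [← expand (fun e => t^(2*e)) (fun f => (f:ℝ)^2 * t^(2*f-2))]
  rw [← expand (fun e => (e:ℝ)^2 * t^(2*e-2)) (fun f => t^(2*f))]
  have h3 : ∑ e ∈ S, ∑ f ∈ S, 2 * (((e:ℝ) * t^(2*e-1)) * ((f:ℝ) * t^(2*f-1)))
      = 2 * ((∑ e ∈ S, (e:ℝ) * t^(2*e-1)) * (∑ f ∈ S, (f:ℝ) * t^(2*f-1))) := by
    rw [expand (fun e => (e:ℝ) * t^(2*e-1)) (fun f => (f:ℝ) * t^(2*f-1))]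
    rw [Finset.mul_sum]
    apply Finset.sum_congr rfl; intro e _
    rw [Finset.mul_sum]
  rw [h3]
  unfold ES gS hS qS
  ring

noncomputable def AA (S : Finset ℕ) (f : ℕ) (t : ℝ) : ℝ := ∑ e ∈ S.filter (· < f), t ^ (2*e)

lemma double_le (S : Finset ℕ) (t : ℝ) (ht : 0 ≤ t) :
    ∑ e ∈ S, ∑ f ∈ S, ((f:ℝ) - (e:ℝ))^2 * t^(2*e+2*f-2)
      ≤ 2 * ∑ f ∈ S, (f:ℝ)^2 * t^(2*f-2) * AA S f t := by
  -- step 1: per-term bound by indicator split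
  have step1 : ∑ e ∈ S, ∑ f ∈ S, ((f:ℝ) - (e:ℝ))^2 * t^(2*e+2*f-2)
      ≤ ∑ e ∈ S, ∑ f ∈ S, ((if e < f then (f:ℝ)^2 * t^(2*e+2*f-2) else 0)
          + (if f < e then (e:ℝ)^2 * t^(2*e+2*f-2) else 0)) := by
    apply Finset.sum_le_sum; intro e _; apply Finset.sum_le_sum; intro f _
    have hX : (0:ℝ) ≤ t^(2*e+2*f-2) := pow_nonneg ht _
    rcases lt_trichotomy e f with h | h | h
    · rw [if_pos h, if_neg (by omega), add_zero]
      have he : (0:ℝ) ≤ (e:ℝ) := Nat.cast_nonneg e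
      have hef : (e:ℝ) ≤ (f:ℝ) := by exact_mod_cast h.le
      have hco : ((f:ℝ) - (e:ℝ))^2 ≤ (f:ℝ)^2 := by nlinarith
      exact mul_le_mul_of_nonneg_right hco hX
    · subst h; simp [lt_irrefl]
    · rw [if_neg (by omega), if_pos h, zero_add]
      have hf : (0:ℝ) ≤ (f:ℝ) := Nat.cast_nonneg f
      have hef : (f:ℝ) ≤ (e:ℝ) := by exact_mod_cast h.le
      have hco : ((f:ℝ) - (e:ℝ))^2 ≤ (e:ℝ)^2 := by nlinarith
      exact mul_le_mul_of_nonneg_right hco hX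
  refine step1.trans ?_
  -- split into two double sums
  have hsplit : ∑ e ∈ S, ∑ f ∈ S, ((if e < f then (f:ℝ)^2 * t^(2*e+2*f-2) else 0)
          + (if f < e then (e:ℝ)^2 * t^(2*e+2*f-2) else 0))
      = (∑ e ∈ S, ∑ f ∈ S, (if e < f then (f:ℝ)^2 * t^(2*e+2*f-2) else 0))
        + (∑ e ∈ S, ∑ f ∈ S, (if f < e then (e:ℝ)^2 * t^(2*e+2*f-2) else 0)) := by
    rw [← Finset.sum_add_distrib]
    apply Finset.sum_congr rfl; intro e _
    rw [← Finset.sum_add_distrib]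
  rw [hsplit]
  -- the second double sum equals the first (swap)
  have hswap : (∑ e ∈ S, ∑ f ∈ S, (if f < e then (e:ℝ)^2 * t^(2*e+2*f-2) else 0))
      = (∑ e ∈ S, ∑ f ∈ S, (if e < f then (f:ℝ)^2 * t^(2*e+2*f-2) else 0)) := by
    rw [Finset.sum_comm]
    apply Finset.sum_congr rfl; intro f _
    apply Finset.sum_congr rfl; intro e _
    have hexp : 2*f+2*e-2 = 2*e+2*f-2 := by omega
    rw [hexp]
  rw [hswap]
  -- identify with the AA-sum
  have hAA : (∑ e ∈ S, ∑ f ∈ S, (if e < f then (f:ℝ)^2 * t^(2*e+2*f-2) else 0))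
      = ∑ f ∈ S, (f:ℝ)^2 * t^(2*f-2) * AA S f t := by
    rw [Finset.sum_comm]
    apply Finset.sum_congr rfl; intro f _
    unfold AA
    rw [Finset.sum_filter, Finset.mul_sum]
    apply Finset.sum_congr rfl; intro e _
    rcases lt_or_ge e f with h | h
    · rw [if_pos h, if_pos h]
      have hf1 : 1 ≤ f := by omega
      have hexp : 2*e+2*f-2 = (2*f-2) + 2*e := by omega
      rw [hexp, pow_add]
      ring
    · rw [if_neg (by omega), if_neg (by omega), mul_zero]
  rw [hAA]
  have hnn : (0:ℝ) ≤ ∑ f ∈ S, (f:ℝ)^2 * t^(2*f-2) * AA S f t := by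
    apply Finset.sum_nonneg; intro f _
    have h1 : (0:ℝ) ≤ AA S f t := Finset.sum_nonneg (fun e _ => pow_nonneg ht _)
    have h2 : (0:ℝ) ≤ t^(2*f-2) := pow_nonneg ht _
    positivity
  linarith

lemma sqrt_sum_le {α : Type*} (s : Finset α) (F : α → ℝ) :
    Real.sqrt (∑ a ∈ s, F a) ≤ ∑ a ∈ s, Real.sqrt (F a) := by
  induction s using Finset.cons_induction with
  | empty => simp
  | cons a s ha ih =>
    rw [Finset.sum_cons, Finset.sum_cons]
    have h1 : Real.sqrt (F a + ∑ x ∈ s, F x) ≤ Real.sqrt (F a) + Real.sqrt (∑ x ∈ s, F x) := by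
      have hs1 : (0:ℝ) ≤ Real.sqrt (F a) := Real.sqrt_nonneg _
      have hs2 : (0:ℝ) ≤ Real.sqrt (∑ x ∈ s, F x) := Real.sqrt_nonneg _
      have key : F a + ∑ x ∈ s, F x ≤ (Real.sqrt (F a) + Real.sqrt (∑ x ∈ s, F x))^2 := by
        have e0 : ∀ x:ℝ, x ≤ Real.sqrt x ^ 2 := by
          intro x
          rcases le_or_gt 0 x with h|h
          · rw [Real.sq_sqrt h]
          · nlinarith [sq_nonneg (Real.sqrt x)]
        nlinarith [mul_nonneg hs1 hs2, e0 (F a), e0 (∑ x ∈ s, F x)]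
      calc Real.sqrt (F a + ∑ x ∈ s, F x) ≤ Real.sqrt ((Real.sqrt (F a) + Real.sqrt (∑ x ∈ s, F x))^2) :=
            Real.sqrt_le_sqrt key
        _ = _ := Real.sqrt_sq (by positivity)
    exact h1.trans (by linarith)

def cc (S : Finset ℕ) (f : ℕ) : ℕ := (S.filter (fun e => 0 < e ∧ e ≤ f)).card

noncomputable def mm (S : Finset ℕ) (f : ℕ) (t : ℝ) : ℝ :=
  (f:ℝ) * t^(f-1) / Real.sqrt (1 + (cc S f : ℝ) * t^(2*f))

lemma g_ge_one (S : Finset ℕ) (h0 : 0 ∈ S) (t : ℝ) : 1 ≤ gS S t := by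
  unfold gS
  have h1 : ∀ e ∈ S, (0:ℝ) ≤ t^(2*e) := by
    intro e _; rw [pow_mul']; positivity
  have := Finset.single_le_sum h1 h0
  simpa using this

lemma g_pos (S : Finset ℕ) (h0 : 0 ∈ S) (t : ℝ) : 0 < gS S t :=
  lt_of_lt_of_le one_pos (g_ge_one S h0 t)

lemma A_le_g (S : Finset ℕ) (f : ℕ) (t : ℝ) : AA S f t ≤ gS S t := by
  unfold AA gS
  apply Finset.sum_le_sum_of_subset_of_nonneg (Finset.filter_subset _ _)
  intro e _ _; rw [pow_mul']; positivity

lemma A_nonneg (S : Finset ℕ) (f : ℕ) (t : ℝ) : 0 ≤ AA S f t := by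
  unfold AA
  apply Finset.sum_nonneg; intro e _; rw [pow_mul']; positivity

lemma B_le_g (S : Finset ℕ) (h0 : 0 ∈ S) (f : ℕ) (hf : f ∈ S) (t : ℝ)
    (ht : t ∈ Set.Icc (0:ℝ) 1) :
    1 + (cc S f : ℝ) * t^(2*f) ≤ gS S t := by
  obtain ⟨ht0, ht1⟩ := ht
  set T := S.filter (fun e => 0 < e ∧ e ≤ f) with hT
  have h0T : 0 ∉ T := by simp [hT]
  have hsub : insert 0 T ⊆ S := by
    intro x hx
    rcases Finset.mem_insert.1 hx with h | h
    · subst h; exact h0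
    · exact (Finset.mem_filter.1 h).1
  have hstep : ∑ e ∈ insert 0 T, t^(2*e) ≤ gS S t := by
    unfold gS
    apply Finset.sum_le_sum_of_subset_of_nonneg hsub
    intro e _ _; rw [pow_mul']; positivity
  have hins : ∑ e ∈ insert 0 T, t^(2*e) = 1 + ∑ e ∈ T, t^(2*e) := by
    rw [Finset.sum_insert h0T]; norm_num
  have hterm : ∀ e ∈ T, t^(2*f) ≤ t^(2*e) := by
    intro e he
    have h2 : e ≤ f := ((Finset.mem_filter.1 he).2).2
    exact pow_le_pow_of_le_one ht0 ht1 (by omega)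
  have hsumT : (cc S f : ℝ) * t^(2*f) ≤ ∑ e ∈ T, t^(2*e) := by
    have := Finset.sum_le_sum hterm
    rw [Finset.sum_const] at this
    rw [cc, ← hT]
    rwa [nsmul_eq_mul] at this
  linarith

lemma sqrtW_eq (S : Finset ℕ) (f : ℕ) (t : ℝ) (ht : 0 ≤ t) :
    Real.sqrt ((f:ℝ)^2 * t^(2*f-2) * AA S f t)
      = (f:ℝ) * t^(f-1) * Real.sqrt (AA S f t) := by
  rcases Nat.eq_zero_or_pos f with h | h
  · subst h; simp
  have h1 : 2*f-2 = 2*(f-1) := by omega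
  have h2 : (f:ℝ)^2 * t^(2*f-2) = ((f:ℝ) * t^(f-1))^2 := by
    rw [h1, pow_mul']
    ring
  rw [h2, Real.sqrt_mul (sq_nonneg _), Real.sqrt_sq (by positivity)]

lemma pointwise_maj (S : Finset ℕ) (h0 : 0 ∈ S) (t : ℝ) (ht : t ∈ Set.Icc (0:ℝ) 1) :
    Real.sqrt (ES S t) / gS S t ≤ ∑ f ∈ S, mm S f t := by
  obtain ⟨ht0, ht1⟩ := ht
  have hgpos := g_pos S h0 t
  have hESle : ES S t ≤ ∑ f ∈ S, (f:ℝ)^2 * t^(2*f-2) * AA S f t := by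
    have h1 := two_ES S t
    have h2 := double_le S t ht0
    linarith
  have hsq : Real.sqrt (ES S t) ≤ ∑ f ∈ S, (f:ℝ) * t^(f-1) * Real.sqrt (AA S f t) := by
    calc Real.sqrt (ES S t) ≤ Real.sqrt (∑ f ∈ S, (f:ℝ)^2 * t^(2*f-2) * AA S f t) :=
          Real.sqrt_le_sqrt hESle
      _ ≤ ∑ f ∈ S, Real.sqrt ((f:ℝ)^2 * t^(2*f-2) * AA S f t) := sqrt_sum_le _ _
      _ = ∑ f ∈ S, (f:ℝ) * t^(f-1) * Real.sqrt (AA S f t) := by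
          apply Finset.sum_congr rfl; intro f _; exact sqrtW_eq S f t ht0
  have hdiv : Real.sqrt (ES S t) / gS S t
      ≤ ∑ f ∈ S, ((f:ℝ) * t^(f-1) * Real.sqrt (AA S f t)) / gS S t := by
    rw [← Finset.sum_div]
    gcongr
  refine hdiv.trans (Finset.sum_le_sum ?_)
  intro f hf
  -- per-f comparison with mm
  unfold mm
  set a := (f:ℝ) * t^(f-1) with hadef
  have ha : 0 ≤ a := by positivity
  set A := AA S f t with hAdef
  set B := 1 + (cc S f : ℝ) * t^(2*f) with hBdef
  have hB1 : (1:ℝ) ≤ B := by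
    rw [hBdef]
    have : (0:ℝ) ≤ (cc S f : ℝ) * t^(2*f) := by positivity
    linarith
  have hB0 : (0:ℝ) < B := by linarith
  have hsB : (0:ℝ) < Real.sqrt B := Real.sqrt_pos.2 hB0
  have hAg : A ≤ gS S t := A_le_g S f t
  have hBg : B ≤ gS S t := B_le_g S h0 f hf t ⟨ht0, ht1⟩
  have hA0 : 0 ≤ A := A_nonneg S f t
  have hkey : Real.sqrt A * Real.sqrt B ≤ gS S t := by
    rw [← Real.sqrt_mul hA0]
    calc Real.sqrt (A * B) ≤ Real.sqrt (gS S t * gS S t) := by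
          apply Real.sqrt_le_sqrt
          exact mul_le_mul hAg hBg hB0.le hgpos.le
      _ = gS S t := Real.sqrt_mul_self hgpos.le
  rw [div_le_div_iff₀ hgpos hsB]
  calc a * Real.sqrt A * Real.sqrt B = a * (Real.sqrt A * Real.sqrt B) := by ring
    _ ≤ a * gS S t := mul_le_mul_of_nonneg_left hkey ha

lemma cc_lt_cc (S : Finset ℕ) (f f' : ℕ) (hf' : f' ∈ S) (h : f < f') : cc S f < cc S f' := by
  unfold cc
  apply Finset.card_lt_card
  rw [Finset.ssubset_iff_of_subset]
  · exact ⟨f', Finset.mem_filter.2 ⟨hf', by omega, le_refl _⟩, by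
      intro hmem
      have := (Finset.mem_filter.1 hmem).2.2
      omega⟩
  · intro e he
    rw [Finset.mem_filter] at he ⊢
    exact ⟨he.1, he.2.1, by omega⟩

lemma cc_le (S : Finset ℕ) (h0 : 0 ∈ S) (f : ℕ) : cc S f ≤ S.card - 1 := by
  unfold cc
  have hsub : S.filter (fun e => 0 < e ∧ e ≤ f) ⊆ S.erase 0 := by
    intro e he
    rw [Finset.mem_erase]
    have := Finset.mem_filter.1 he
    exact ⟨by omega, this.1⟩
  calc (S.filter (fun e => 0 < e ∧ e ≤ f)).card ≤ (S.erase 0).card := Finset.card_le_card hsub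
    _ = S.card - 1 := Finset.card_erase_of_mem h0

lemma cc_pos (S : Finset ℕ) (f : ℕ) (hf : f ∈ S) (hf1 : 1 ≤ f) : 1 ≤ cc S f := by
  unfold cc
  have : f ∈ S.filter (fun e => 0 < e ∧ e ≤ f) := Finset.mem_filter.2 ⟨hf, by omega, le_refl _⟩
  exact Finset.card_pos.2 ⟨f, this⟩

lemma mm_zero (S : Finset ℕ) (t : ℝ) : mm S 0 t = 0 := by
  unfold mm; norm_num

lemma intmm_le (S : Finset ℕ) (f : ℕ) (hf : f ∈ S) :
    (∫ t in (0:ℝ)..1, mm S f t) ≤ uu (cc S f + 1) - uu (cc S f) := by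
  rcases Nat.eq_zero_or_pos f with h | h
  · subst h
    have : (∫ t in (0:ℝ)..1, mm S 0 t) = 0 := by
      simp [mm_zero]
    rw [this]
    unfold cc
    have : (S.filter (fun e => 0 < e ∧ e ≤ 0)).card = 0 := by
      rw [Finset.card_eq_zero, Finset.filter_eq_empty_iff]
      intro e _; omega
    rw [this]
    exact delta_nonneg 0
  · set c := cc S f with hc
    have hc1 : 1 ≤ c := cc_pos S f hf h
    have hcR : (0:ℝ) < Real.sqrt c := Real.sqrt_pos.2 (by exact_mod_cast hc1)
    have heq : (∫ t in (0:ℝ)..1, mm S f t) = Real.arsinh (Real.sqrt c) / Real.sqrt c := by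
      unfold mm
      exact integral_m f c h hc1
    rw [heq]
    rw [div_le_iff₀ hcR]
    have hkj := keyj c hc1
    unfold uu
    push_cast
    calc Real.arsinh (Real.sqrt c)
        ≤ Real.sqrt c * (Real.sqrt ((c:ℝ)+1) * Real.log ((c:ℝ)+1) - Real.sqrt c * Real.log c) := hkj
      _ = (Real.sqrt ((c:ℝ)+1) * Real.log ((c:ℝ)+1) - Real.sqrt (c:ℝ) * Real.log (c:ℝ)) * Real.sqrt (c:ℝ) := by ring

lemma cc_injOn (S : Finset ℕ) : ∀ x ∈ S, ∀ y ∈ S, cc S x = cc S y → x = y := by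
  intro x hx y hy hxy
  rcases lt_trichotomy x y with h | h | h
  · have := cc_lt_cc S x y hy h; omega
  · exact h
  · have := cc_lt_cc S y x hx h; omega

lemma sum_Dd_le (S : Finset ℕ) (h0 : 0 ∈ S) (k : ℕ) (hcard : S.card = k) (hk : 1 ≤ k) :
    ∑ f ∈ S, (uu (cc S f + 1) - uu (cc S f)) ≤ Real.sqrt k * Real.log k := by
  have himg : ∑ f ∈ S, (uu (cc S f + 1) - uu (cc S f))
      = ∑ j ∈ S.image (cc S), (uu (j+1) - uu j) := by
    rw [Finset.sum_image (cc_injOn S)]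
  rw [himg]
  have hsub : S.image (cc S) ⊆ Finset.Icc 0 (k-1) := by
    intro j hj
    rw [Finset.mem_image] at hj
    obtain ⟨f, hf, rfl⟩ := hj
    rw [Finset.mem_Icc]
    exact ⟨Nat.zero_le _, hcard ▸ cc_le S h0 f⟩
  have hle : ∑ j ∈ S.image (cc S), (uu (j+1) - uu j)
      ≤ ∑ j ∈ Finset.Icc 0 (k-1), (uu (j+1) - uu j) :=
    Finset.sum_le_sum_of_subset_of_nonneg hsub (fun j _ _ => delta_nonneg j)
  refine hle.trans ?_
  have hicc : Finset.Icc 0 (k-1) = insert 0 (Finset.Icc 1 (k-1)) := by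
    ext j
    simp [Finset.mem_Icc, Finset.mem_insert]
    omega
  rw [hicc, Finset.sum_insert (by simp), sum_delta k hk]
  have : uu (0+1) - uu 0 = 0 := by unfold uu; norm_num
  rw [this, zero_add]

end Aux

-- continuity facts
lemma gS_continuous (S : Finset ℕ) : Continuous (gS S) := by
  unfold gS
  exact continuous_finset_sum _ (fun e _ => continuous_pow _)

lemma ES_continuous (S : Finset ℕ) : Continuous (ES S) := by
  unfold ES hS qS
  apply Continuous.sub
  · exact (gS_continuous S).mul (continuous_finset_sum _ (fun e _ => by continuity))
  · exact Continuous.pow (continuous_finset_sum _ (fun e _ => by continuity)) 2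

lemma lhs_continuous (S : Finset ℕ) (h0 : 0 ∈ S) :
    Continuous (fun t => Real.sqrt (ES S t) / gS S t) := by
  apply Continuous.div
  · exact (ES_continuous S).sqrt
  · exact gS_continuous S
  · intro x; exact ne_of_gt (g_pos S h0 x)

lemma mm_continuous (S : Finset ℕ) (f : ℕ) : Continuous (mm S f) := by
  unfold mm
  exact m_continuous f (cc S f)

theorem stmt17 (S : Finset ℕ) (k : ℕ) (h0 : 0 ∈ S) (hcard : S.card = k) (hk : 1 ≤ k) :
    zS S ≤ (1 / Real.pi) * Real.sqrt k * Real.log k := by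
  have hint : (∫ t in (0:ℝ)..1, Real.sqrt (ES S t) / gS S t) ≤ Real.sqrt k * Real.log k := by
    have h1 : (∫ t in (0:ℝ)..1, Real.sqrt (ES S t) / gS S t)
        ≤ ∫ t in (0:ℝ)..1, ∑ f ∈ S, mm S f t := by
      apply intervalIntegral.integral_mono_on (by norm_num)
      · exact (lhs_continuous S h0).intervalIntegrable 0 1
      · exact (continuous_finset_sum _ (fun f _ => mm_continuous S f)).intervalIntegrable 0 1
      · intro t ht
        exact pointwise_maj S h0 t ht
    have h2 : (∫ t in (0:ℝ)..1, ∑ f ∈ S, mm S f t) = ∑ f ∈ S, ∫ t in (0:ℝ)..1, mm S f t :=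
      intervalIntegral.integral_finset_sum (fun f _ => (mm_continuous S f).intervalIntegrable 0 1)
    have h3 : ∑ f ∈ S, (∫ t in (0:ℝ)..1, mm S f t)
        ≤ ∑ f ∈ S, (uu (cc S f + 1) - uu (cc S f)) :=
      Finset.sum_le_sum (fun f hf => intmm_le S f hf)
    have h4 := sum_Dd_le S h0 k hcard hk
    linarith [h1, h2 ▸ h1]
  unfold zS
  have hpi : (0:ℝ) ≤ 1 / Real.pi := by positivity
  calc (1 / Real.pi) * ∫ t in (0:ℝ)..1, Real.sqrt (ES S t) / gS S t
      ≤ (1 / Real.pi) * (Real.sqrt k * Real.log k) := by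
        apply mul_le_mul_of_nonneg_left _ hpi
        linarith [hint]
    _ = (1 / Real.pi) * Real.sqrt k * Real.log k := by ring
end

section
/- Let t > 0 and let g₁, g₂ : ℝ → ℝ be twice differentiable and positive on a neighborhood of t. Then 𝓘(g₁ + g₂)(t) = (g₁(t)/(g₁(t)+g₂(t)))·𝓘(g₁)(t) + (g₂(t)/(g₁(t)+g₂(t)))·𝓘(g₂)(t) + (1/(g₁(t)·g₂(t)))·((g₁(t)·(deriv g₂ t) − g₂(t)·(deriv g₁ t))/(g₁(t)+g₂(t)))². -/
open Real

/-- `𝓘(g)(t) = (g'/g)'(t) + g'(t)/(t·g(t))`. -/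
noncomputable def IEK (g : ℝ → ℝ) (t : ℝ) : ℝ :=
  deriv (fun s => deriv g s / g s) t + deriv g t / (t * g t)

theorem stmt19 (t : ℝ) (ht : 0 < t) (g₁ g₂ : ℝ → ℝ)
    (h₁ : ∀ᶠ s in nhds t, DifferentiableAt ℝ g₁ s ∧ DifferentiableAt ℝ (deriv g₁) s ∧ 0 < g₁ s)
    (h₂ : ∀ᶠ s in nhds t, DifferentiableAt ℝ g₂ s ∧ DifferentiableAt ℝ (deriv g₂) s ∧ 0 < g₂ s) :
    IEK (fun s => g₁ s + g₂ s) t =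
      (g₁ t / (g₁ t + g₂ t)) * IEK g₁ t + (g₂ t / (g₁ t + g₂ t)) * IEK g₂ t +
        (1 / (g₁ t * g₂ t)) *
          ((g₁ t * deriv g₂ t - g₂ t * deriv g₁ t) / (g₁ t + g₂ t)) ^ 2 := by
  obtain ⟨hd1, hd1', hp1⟩ := h₁.self_of_nhds
  obtain ⟨hd2, hd2', hp2⟩ := h₂.self_of_nhds
  have hsum : (0:ℝ) < g₁ t + g₂ t := by linarith
  -- deriv of sum eventually
  have hder : (fun s => deriv (fun s => g₁ s + g₂ s) s) =ᶠ[nhds t]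
      (fun s => deriv g₁ s + deriv g₂ s) := by
    filter_upwards [h₁, h₂] with s hs1 hs2
    exact deriv_add hs1.1 hs2.1
  have hratio : (fun s => deriv (fun s => g₁ s + g₂ s) s / (fun s => g₁ s + g₂ s) s)
      =ᶠ[nhds t] (fun s => (deriv g₁ s + deriv g₂ s) / (g₁ s + g₂ s)) := by
    filter_upwards [hder] with s hs
    simp [hs]
  have hdsum : deriv (fun s => g₁ s + g₂ s) t = deriv g₁ t + deriv g₂ t :=
    deriv_add hd1 hd2
  have key1 : deriv (fun s => deriv (fun s => g₁ s + g₂ s) s / (fun s => g₁ s + g₂ s) s) t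
      = ((deriv (deriv g₁) t + deriv (deriv g₂) t) * (g₁ t + g₂ t)
          - (deriv g₁ t + deriv g₂ t) * (deriv g₁ t + deriv g₂ t)) / (g₁ t + g₂ t) ^ 2 := by
    rw [hratio.deriv_eq]
    rw [deriv_fun_div (hd1'.fun_add hd2') (hd1.fun_add hd2) hsum.ne']
    rw [deriv_fun_add hd1' hd2', deriv_fun_add hd1 hd2]
  have key2 : deriv (fun s => deriv g₁ s / g₁ s) t
      = (deriv (deriv g₁) t * g₁ t - deriv g₁ t * deriv g₁ t) / g₁ t ^ 2 :=
    deriv_div hd1' hd1 hp1.ne'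
  have key3 : deriv (fun s => deriv g₂ s / g₂ s) t
      = (deriv (deriv g₂) t * g₂ t - deriv g₂ t * deriv g₂ t) / g₂ t ^ 2 :=
    deriv_div hd2' hd2 hp2.ne'
  simp only [IEK, key1, key2, key3, hdsum]
  field_simp
  ring
end
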